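/- Let B be an m×n real matrix with rank(B) = n − 1, let a ∈ ℝ^m, let x ∈ ℝⁿ be a nonzero solution of Bx = 0, and let y ∈ ℝⁿ satisfy By = a. Let g : (ℝ₊)ⁿ → ℝ₊ satisfy the scaling invariance: for all s = (s₁,…,s_m) with sⱼ > 0 and all W = (W₁,…,Wₙ) with Wᵢ > 0, g(W₁·∏ⱼ sⱼ^{B_{j1}}, …, Wₙ·∏ⱼ sⱼ^{B_{jn}}) = (∏ⱼ sⱼ^{aⱼ}) · g(W). Then there exists a function F : ℝ₊ → ℝ₊ such that for all W, g(W) = F(W₁^{x₁} ⋯ Wₙ^{xₙ}) · W₁^{y₁} ⋯ Wₙ^{yₙ}. -/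

import Mathlib

/-- The linear functional `v ↦ ∑ i, v i * x i`. -/
def piThmDotMap {n : ℕ} (x : Fin n → ℝ) : (Fin n → ℝ) →ₗ[ℝ] ℝ where
  toFun v := ∑ i, v i * x i
  map_add' u v := by simp [add_mul, Finset.sum_add_distrib]
  map_smul' c v := by simp [Finset.mul_sum, mul_assoc]

lemma piThm_range_eq_ker {m n : ℕ} (B : Matrix (Fin m) (Fin n) ℝ)
    (hrank : B.rank = n - 1) (x : Fin n → ℝ) (hx0 : x ≠ 0) (hx : B.mulVec x = 0) :
    LinearMap.range B.transpose.mulVecLin = LinearMap.ker (piThmDotMap x) := by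
  have hS : (0:ℝ) < ∑ i, x i * x i := by
    obtain ⟨i, hi⟩ := Function.ne_iff.1 hx0
    have hxi : x i ≠ 0 := by simpa using hi
    exact Finset.sum_pos' (fun j _ => mul_self_nonneg _)
      ⟨i, Finset.mem_univ i, mul_self_pos.2 hxi⟩
  have hle : LinearMap.range B.transpose.mulVecLin ≤ LinearMap.ker (piThmDotMap x) := by
    rintro v ⟨t, rfl⟩
    have : B.transpose.mulVecLin t = B.vecMul t := by
      rw [Matrix.mulVecLin_apply, Matrix.mulVec_transpose]
    rw [LinearMap.mem_ker, this]
    show ∑ i, B.vecMul t i * x i = 0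
    have := Matrix.dotProduct_mulVec t B x
    rw [hx] at this
    simpa [dotProduct] using this.symm
  have hsurj : Function.Surjective (piThmDotMap x) := by
    intro r
    refine ⟨(r / (∑ i, x i * x i)) • x, ?_⟩
    rw [map_smul]
    show (r / (∑ i, x i * x i)) * (∑ i, x i * x i) = r
    exact div_mul_cancel₀ r hS.ne'
  have hr1 : Module.finrank ℝ (LinearMap.range (piThmDotMap x)) = 1 := by
    rw [LinearMap.range_eq_top.2 hsurj, finrank_top, Module.finrank_self]
  have hker : Module.finrank ℝ (LinearMap.ker (piThmDotMap x)) = n - 1 := by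
    have h := LinearMap.finrank_range_add_finrank_ker (piThmDotMap x)
    rw [hr1, Module.finrank_fintype_fun_eq_card, Fintype.card_fin] at h
    omega
  have hrange : Module.finrank ℝ (LinearMap.range B.transpose.mulVecLin) = n - 1 := by
    have : B.transpose.rank = n - 1 := by rw [Matrix.rank_transpose]; exact hrank
    simpa [Matrix.rank] using this
  exact Submodule.eq_of_le_of_finrank_eq hle (by rw [hrange, hker])

/-- The case `k = 1` of the Pi-Theorem: if the dimension matrix `B` has rank `n - 1`,
`x ≠ 0` solves `B x = 0` and `y` solves `B y = a`, then any positive, unit-scaling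
invariant `g` is of the form
`g W = F (W 1 ^ x 1 * ⋯ * W n ^ x n) * W 1 ^ y 1 * ⋯ * W n ^ y n`. -/
theorem pi_theorem_corank_one (m n : ℕ) (B : Matrix (Fin m) (Fin n) ℝ)
    (hrank : B.rank = n - 1) (a : Fin m → ℝ)
    (x : Fin n → ℝ) (hx0 : x ≠ 0) (hx : B.mulVec x = 0)
    (y : Fin n → ℝ) (hy : B.mulVec y = a)
    (g : (Fin n → ℝ) → ℝ)
    (hg_pos : ∀ W : Fin n → ℝ, (∀ i, 0 < W i) → 0 < g W)
    (hg_inv : ∀ (s : Fin m → ℝ) (W : Fin n → ℝ), (∀ j, 0 < s j) → (∀ i, 0 < W i) →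
      g (fun i => W i * ∏ j, s j ^ B j i) = (∏ j, s j ^ a j) * g W) :
    ∃ F : ℝ → ℝ, (∀ z : ℝ, 0 < z → 0 < F z) ∧
      ∀ W : Fin n → ℝ, (∀ i, 0 < W i) →
        g W = F (∏ i, W i ^ x i) * ∏ i, W i ^ y i := by
  have hS : (0:ℝ) < ∑ i, x i * x i := by
    obtain ⟨i, hi⟩ := Function.ne_iff.1 hx0
    have hxi : x i ≠ 0 := by simpa using hi
    exact Finset.sum_pos' (fun j _ => mul_self_nonneg _)
      ⟨i, Finset.mem_univ i, mul_self_pos.2 hxi⟩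
  -- key invariance: g W / ∏ W^y depends only on ∑ x i * log (W i)
  have key : ∀ W W' : Fin n → ℝ, (∀ i, 0 < W i) → (∀ i, 0 < W' i) →
      (∑ i, x i * (Real.log (W' i) - Real.log (W i)) = 0) →
      g W' * ∏ i, W i ^ y i = g W * ∏ i, W' i ^ y i := by
    intro W W' hW hW' hsum
    set u : Fin n → ℝ := fun i => Real.log (W' i) - Real.log (W i) with hu
    have humem : u ∈ LinearMap.ker (piThmDotMap x) := by
      show ∑ i, u i * x i = 0
      rw [← hsum]; exact Finset.sum_congr rfl fun i _ => mul_comm _ _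
    rw [← piThm_range_eq_ker B hrank x hx0 hx] at humem
    obtain ⟨t, ht⟩ := humem
    have htv : B.vecMul t = u := by
      rw [← ht, Matrix.mulVecLin_apply, Matrix.mulVec_transpose]
    have htv' : ∀ i, ∑ j, t j * B j i = u i := fun i => by
      have := congrFun htv i
      simpa [Matrix.vecMul, dotProduct] using this
    set s : Fin m → ℝ := fun j => Real.exp (t j) with hs
    have hspos : ∀ j, 0 < s j := fun j => Real.exp_pos _
    have hWfun : (fun i => W i * ∏ j, s j ^ B j i) = W' := by
      funext i
      have h1 : ∏ j, s j ^ B j i = Real.exp (u i) := by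
        rw [← htv' i, Real.exp_sum]
        refine Finset.prod_congr rfl fun j _ => ?_
        rw [Real.rpow_def_of_pos (Real.exp_pos _), Real.log_exp]
      rw [h1, hu]
      rw [Real.exp_sub, Real.exp_log (hW' i), Real.exp_log (hW i)]
      field_simp [(hW i).ne']
    have hsa : ∏ j, s j ^ a j = Real.exp (∑ i, u i * y i) := by
      have h1 : ∏ j, s j ^ a j = Real.exp (∑ j, t j * a j) := by
        rw [Real.exp_sum]
        refine Finset.prod_congr rfl fun j _ => ?_
        rw [Real.rpow_def_of_pos (Real.exp_pos _), Real.log_exp]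
      have h2 : ∑ j, t j * a j = ∑ i, u i * y i := by
        have := Matrix.dotProduct_mulVec t B y
        rw [hy, htv] at this
        simpa [dotProduct] using this
      rw [h1, h2]
    have hgW' : g W' = Real.exp (∑ i, u i * y i) * g W := by
      rw [← hWfun, hg_inv s W hspos hW, hsa]
    have hPW' : (∏ i, W' i ^ y i) = Real.exp (∑ i, u i * y i) * ∏ i, W i ^ y i := by
      rw [Real.exp_sum, ← Finset.prod_mul_distrib]
      refine Finset.prod_congr rfl fun i _ => ?_
      rw [Real.rpow_def_of_pos (hW' i), Real.rpow_def_of_pos (hW i), ← Real.exp_add]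
      congr 1
      simp [hu]; ring
    rw [hgW', hPW']; ring
  set c : ℝ := (∑ i, x i * x i)⁻¹ with hc
  refine ⟨fun z => if hz : 0 < z then
      g (fun i => z ^ (c * x i)) * (∏ i, (z ^ (c * x i) : ℝ) ^ y i)⁻¹ else 1, ?_, ?_⟩
  · intro z hz
    dsimp only
    rw [dif_pos hz]
    have h1 : ∀ i, (0:ℝ) < z ^ (c * x i) := fun i => Real.rpow_pos_of_pos hz _
    exact mul_pos (hg_pos _ h1)
      (inv_pos.2 (Finset.prod_pos fun i _ => Real.rpow_pos_of_pos (h1 i) _))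
  · intro W hW
    set P : ℝ := ∏ i, W i ^ x i with hPdef
    have hP : 0 < P := Finset.prod_pos fun i _ => Real.rpow_pos_of_pos (hW i) _
    set W' : Fin n → ℝ := fun i => P ^ (c * x i) with hW'def
    have hW' : ∀ i, 0 < W' i := fun i => Real.rpow_pos_of_pos hP _
    have hlogP : Real.log P = ∑ i, x i * Real.log (W i) := by
      rw [hPdef, Real.log_prod (fun i _ => (Real.rpow_pos_of_pos (hW i) _).ne')]
      exact Finset.sum_congr rfl fun i _ => Real.log_rpow (hW i) _
    have hsum : ∑ i, x i * (Real.log (W i) - Real.log (W' i)) = 0 := by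
      have hlogW' : ∀ i, Real.log (W' i) = c * x i * Real.log P := fun i =>
        Real.log_rpow hP _
      have expand : ∀ i ∈ Finset.univ, x i * (Real.log (W i) - Real.log (W' i))
          = x i * Real.log (W i) - (c * Real.log P) * (x i * x i) := by
        intro i _; rw [hlogW' i]; ring
      rw [Finset.sum_congr rfl expand, Finset.sum_sub_distrib, ← hlogP, ← Finset.mul_sum, hc]
      field_simp
      have hS2 : (∑ i, x i ^ 2) ≠ 0 := by simpa [sq] using hS.ne'
      rw [div_self hS2, sub_self, mul_zero]
    have hk := key W' W hW' hW hsum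
    have hQ : (0:ℝ) < ∏ i, W' i ^ y i :=
      Finset.prod_pos fun i _ => Real.rpow_pos_of_pos (hW' i) _
    dsimp only
    rw [dif_pos hP]
    show g W = g W' * (∏ i, W' i ^ y i)⁻¹ * ∏ i, W i ^ y i
    field_simp
    linarith [hk]
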